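/- Let p ∈ ℕ, p ≥ 1, C > 0, q > 0, and V(z) := (1+q)C|z|^{2p} + q·log(1/|z|). Set R := (2pC)^{−1/(2p)} and ρ := (q/(2pC(1+q)))^{1/(2p)}, and let μ be the measure with density ((1+q)·2p²C/π)·|z|^{2p−2} with respect to dA, restricted to the closed annulus {z : ρ ≤ |z| ≤ R}. Then μ is a probability measure, and there exists a constant F₀ such that ∫ log(1/|w−z|) dμ(w) + V(z) = F₀ for all z with ρ ≤ |z| ≤ R, and ∫ log(1/|w−z|) dμ(w) + V(z) ≥ F₀ for all z ∈ ℂ \ {0}. (Hence, by Frostman's theorem, the support of the equilibrium measure for V is the annulus {ρ ≤ |z| ≤ R}.) -/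

import Mathlib

open MeasureTheory Metric Set Complex

noncomputable section

/-- Laplacian of a function on `ℂ ≅ ℝ²`: `ΔQ = ∂²Q/∂x² + ∂²Q/∂y²`. -/
def lap (Q : ℂ → ℝ) (z : ℂ) : ℝ :=
  iteratedFDeriv ℝ 2 Q z ![(1 : ℂ), 1] + iteratedFDeriv ℝ 2 Q z ![Complex.I, Complex.I]

/-- The Wirtinger derivative `∂Q = (∂Q/∂x − i ∂Q/∂y)/2` of a real-valued function on `ℂ`. -/
def wirt (Q : ℂ → ℝ) (z : ℂ) : ℂ :=
  (1 / 2 : ℂ) * (((fderiv ℝ Q z 1 : ℝ) : ℂ) - Complex.I * ((fderiv ℝ Q z Complex.I : ℝ) : ℂ))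

/-- A parametrization of the boundary of a smooth bounded domain `Ω ⊆ ℂ`: finitely many
pairwise disjoint `C^∞` embeddings of the circle covering `frontier Ω`, positively oriented
(total winding number `1` around points of `Ω` and `0` around points off `closure Ω`). -/
structure BoundaryParam (Ω : Set ℂ) where
  n : ℕ
  γ : Fin n → ℝ → ℂ
  smooth : ∀ i, ContDiff ℝ (⊤ : ℕ∞) (γ i)
  periodic : ∀ i, Function.Periodic (γ i) (2 * Real.pi)
  injOn : ∀ i, Set.InjOn (γ i) (Set.Ico 0 (2 * Real.pi))
  deriv_ne : ∀ i, ∀ t, deriv (γ i) t ≠ 0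
  cover : frontier Ω = ⋃ i, Set.range (γ i)
  disj : Pairwise (fun i j => Disjoint (Set.range (γ i)) (Set.range (γ j)))
  orient_in : ∀ z ∈ Ω,
    (∑ i, ∫ t in (0:ℝ)..(2 * Real.pi), deriv (γ i) t / (γ i t - z)) = 2 * Real.pi * Complex.I
  orient_out : ∀ z, z ∉ closure Ω →
    (∑ i, ∫ t in (0:ℝ)..(2 * Real.pi), deriv (γ i) t / (γ i t - z)) = 0

/-- Contour integral `∫_{∂Ω} g(z) dz` over the positively oriented boundary of `Ω`,
computed through a boundary parametrization. -/
def contourIntegral {Ω : Set ℂ} (P : BoundaryParam Ω) (g : ℂ → ℂ) : ℂ :=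
  ∑ i, ∫ t in (0:ℝ)..(2 * Real.pi), g (P.γ i t) * deriv (P.γ i) t

/-- `A^∞(Ω)`: holomorphic on `Ω` and `C^∞`-smooth up to the boundary. -/
def AInfty (Ω : Set ℂ) (f : ℂ → ℂ) : Prop :=
  DifferentiableOn ℂ f Ω ∧ ContDiffOn ℝ (⊤ : ℕ∞) f (closure Ω)

/-- The logarithmic potential `∫ log(1/|w−z|) dμ(w)` of a measure `μ` on `ℂ`. -/
def logPot (μ : Measure ℂ) (z : ℂ) : ℝ := ∫ w, Real.log (1 / ‖w - z‖) ∂μ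

/-- `R = (2pC)^{−1/(2p)}`, the radius of the equilibrium support for `Q(z) = C|z|^{2p}`. -/
def Rrad (p : ℕ) (C : ℝ) : ℝ := (2 * (p : ℝ) * C) ^ (-(1 : ℝ) / (2 * (p : ℝ)))

lemma circle_log_int_zero {a : ℂ} (ha : ‖a‖ < 1) :
    ∫ θ in (0:ℝ)..(2*Real.pi), Real.log (‖1 - a * Complex.exp (θ * Complex.I)‖) = 0 := by
  set f : ℂ → ℂ := fun w => Complex.log (1 - a * w) with hf
  have slit : ∀ w : ℂ, ‖w‖ ≤ 1 → (1 - a * w) ∈ Complex.slitPlane := by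
    intro w hw
    refine Complex.mem_slitPlane_iff.2 (Or.inl ?_)
    have h1 : (a * w).re ≤ ‖a * w‖ := Complex.re_le_norm _
    have h2 : ‖a * w‖ < 1 := by
      rw [norm_mul]
      calc ‖a‖ * ‖w‖ ≤ ‖a‖ * 1 :=
        mul_le_mul_of_nonneg_left hw (norm_nonneg a)
      _ < 1 := by simpa using ha
    simp only [Complex.sub_re, Complex.one_re]
    linarith
  have hdiff : DifferentiableOn ℂ f (closedBall 0 1) := by
    intro w hw
    refine (DifferentiableAt.differentiableWithinAt ?_)
    apply DifferentiableAt.clog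
    · fun_prop
    · exact slit w (by simpa using mem_closedBall_zero_iff.1 hw)
  have hdc : DiffContOnCl ℂ f (ball 0 1) := by
    apply DifferentiableOn.diffContOnCl
    rwa [closure_ball (0:ℂ) one_ne_zero]
  have hcauchy := hdc.circleIntegral_sub_inv_smul (w := 0) (by simp)
  have hf0 : f 0 = 0 := by simp [hf]
  rw [hf0, smul_zero] at hcauchy
  have hunfold : (∮ z in C(0, 1), (z - 0)⁻¹ • f z)
      = Complex.I * ∫ θ in (0:ℝ)..(2*Real.pi), f (Complex.exp (θ * Complex.I)) := by
    rw [circleIntegral]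
    rw [← intervalIntegral.integral_const_mul]
    congr 1 with θ
    have hne : Complex.exp (θ * Complex.I) ≠ 0 := Complex.exp_ne_zero _
    simp [deriv_circleMap, circleMap, smul_eq_mul]
    field_simp
  rw [hunfold] at hcauchy
  have hint : (∫ θ in (0:ℝ)..(2*Real.pi), f (Complex.exp (θ * Complex.I))) = 0 := by
    have := mul_eq_zero.1 hcauchy
    simpa [Complex.I_ne_zero] using this
  have hcont : Continuous fun θ : ℝ => f (Complex.exp (θ * Complex.I)) := by
    apply Continuous.clog
    · fun_prop
    · intro θ
      exact slit _ (by simp [Complex.norm_exp])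
  have := Complex.reCLM.intervalIntegral_comp_comm
    (f := fun θ : ℝ => f (Complex.exp (θ * Complex.I))) (a := 0) (b := 2*Real.pi) (μ := volume)
    (hcont.intervalIntegrable _ _)
  rw [hint] at this
  simp only [map_zero] at this
  rw [← this]
  congr 1 with θ
  simp [f, Complex.log_re]



lemma habs_ne {a : ℂ} (ha : ‖a‖ < 1) (θ : ℝ) :
    ‖1 - a * Complex.exp (θ * Complex.I)‖ ≠ 0 := by
  have h2 : ‖a * Complex.exp (θ * Complex.I)‖ < 1 := by
    rw [norm_mul, Complex.norm_exp]; simpa using ha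
  intro h0
  rw [norm_eq_zero, sub_eq_zero] at h0
  rw [← h0] at h2
  simp at h2

lemma circle_int_of_factor {m : ℝ} (hm : 0 < m) {a : ℂ} (ha : ‖a‖ < 1)
    {z : ℂ} {s : ℝ}
    (key : ∀ θ : ℝ, ‖(s:ℂ) * Complex.exp (θ * Complex.I) - z‖
      = m * ‖1 - a * Complex.exp (θ * Complex.I)‖) :
    (∫ θ in (0:ℝ)..(2*Real.pi),
        Real.log (‖(s:ℂ) * Complex.exp (θ * Complex.I) - z‖))
      = 2 * Real.pi * Real.log m := by
  have : (∫ θ in (0:ℝ)..(2*Real.pi),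
      Real.log (‖(s:ℂ) * Complex.exp (θ * Complex.I) - z‖))
      = ∫ θ in (0:ℝ)..(2*Real.pi),
        (Real.log m + Real.log (‖1 - a * Complex.exp (θ * Complex.I)‖)) := by
    congr 1 with θ
    rw [key θ, Real.log_mul hm.ne' (habs_ne ha θ)]
  rw [this, intervalIntegral.integral_add intervalIntegrable_const]
  · rw [circle_log_int_zero ha, add_zero, intervalIntegral.integral_const]
    simp only [smul_eq_mul, sub_zero]
  · apply Continuous.intervalIntegrable
    rw [continuous_iff_continuousAt]
    intro θ
    have hc : Continuous fun θ : ℝ => ‖1 - a * Complex.exp (θ * Complex.I)‖ :=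
      continuous_norm.comp (by fun_prop)
    exact hc.continuousAt.log (habs_ne ha θ)

lemma circle_avg_log {s : ℝ} (hs : 0 < s) {z : ℂ} (hz : ‖z‖ ≠ s) :
    (∫ θ in (-Real.pi)..Real.pi,
        Real.log (‖(s:ℂ) * Complex.exp (θ * Complex.I) - z‖))
      = 2 * Real.pi * Real.log (max s (‖z‖)) := by
  have hper : Function.Periodic
      (fun θ : ℝ => Real.log (‖(s:ℂ) * Complex.exp (θ * Complex.I) - z‖))
      (2 * Real.pi) := by
    intro θ
    have h : ((θ + 2*Real.pi : ℝ) : ℂ) * Complex.I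
        = ↑θ * Complex.I + 2*Real.pi*Complex.I := by push_cast; ring
    simp only [h, Complex.exp_add, Complex.exp_two_pi_mul_I, mul_one]
  have hshift := hper.intervalIntegral_add_eq (-Real.pi) 0
  rw [show -Real.pi + 2*Real.pi = Real.pi by ring, zero_add] at hshift
  rw [hshift]
  have hs' : (s:ℂ) ≠ 0 := by exact_mod_cast hs.ne'
  rcases lt_or_gt_of_ne hz with hlt | hgt
  · rw [max_eq_left hlt.le]
    set a : ℂ := (starRingEnd ℂ) z / s with ha_def
    have ha : ‖a‖ < 1 := by
      rw [ha_def, norm_div, Complex.norm_conj]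
      simpa [Complex.norm_real, Real.norm_eq_abs, abs_of_pos hs] using (div_lt_one hs).2 hlt
    refine circle_int_of_factor hs ha ?_
    intro θ
    have e1 : (s:ℂ) * Complex.exp (θ * Complex.I) - z
        = Complex.exp (θ * Complex.I) * ((s:ℂ) - z * Complex.exp (-(θ * Complex.I))) := by
      rw [mul_sub, mul_comm ((s:ℂ)) _]
      congr 1
      rw [mul_comm z _, ← mul_assoc, ← Complex.exp_add]
      simp
    have e2 : (starRingEnd ℂ) ((s:ℂ) - z * Complex.exp (-(θ * Complex.I)))
        = (s:ℂ) - (starRingEnd ℂ) z * Complex.exp (θ * Complex.I) := by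
      rw [map_sub, map_mul, ← Complex.exp_conj, Complex.conj_ofReal]
      congr 2
      simp
    have e3 : (s:ℂ) - (starRingEnd ℂ) z * Complex.exp (θ * Complex.I)
        = s * (1 - a * Complex.exp (θ * Complex.I)) := by
      rw [ha_def]
      field_simp
    calc ‖(s:ℂ) * Complex.exp (θ * Complex.I) - z‖
        = ‖(s:ℂ) - z * Complex.exp (-(θ * Complex.I))‖ := by
          rw [e1, norm_mul, Complex.norm_exp]; simp
      _ = ‖(s:ℂ) - (starRingEnd ℂ) z * Complex.exp (θ * Complex.I)‖ := by
          rw [← e2, Complex.norm_conj]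
      _ = s * ‖1 - a * Complex.exp (θ * Complex.I)‖ := by
          rw [e3, norm_mul]
          simp [abs_of_pos hs]
  · rw [max_eq_right hgt.le]
    have hz0 : z ≠ 0 := by
      intro h; rw [h] at hgt; simp at hgt; linarith
    have hzabs : 0 < ‖z‖ := lt_trans hs hgt
    set b : ℂ := (s:ℂ) / z with hb_def
    have hb : ‖b‖ < 1 := by
      rw [hb_def, norm_div]
      rw [div_lt_one hzabs]
      simpa [abs_of_pos hs] using hgt
    refine circle_int_of_factor hzabs hb ?_
    intro θ
    have e : (s:ℂ) * Complex.exp (θ * Complex.I) - z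
        = (-z) * (1 - b * Complex.exp (θ * Complex.I)) := by
      rw [hb_def]
      field_simp
      ring
    rw [e, norm_mul]
    simp


lemma symm_eq (p : ℝ × ℝ) :
    Complex.polarCoord.symm p = (p.1 : ℂ) * Complex.exp (p.2 * Complex.I) := by
  rw [Complex.polarCoord_symm_apply, Complex.exp_mul_I]
  push_cast
  ring

lemma annulus_polar (a b : ℝ) (ha : 0 < a) (g : ℂ → ℝ)
    (hg : Integrable (fun p : ℝ × ℝ => p.1 • g ((p.1 : ℂ) * Complex.exp (p.2 * Complex.I)))
      ((volume.restrict (Icc a b)).prod (volume.restrict (Ioo (-Real.pi) Real.pi)))) :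
    ∫ w in {z : ℂ | a ≤ ‖z‖ ∧ ‖z‖ ≤ b}, g w
      = ∫ s in Icc a b, ∫ θ in Ioo (-Real.pi) Real.pi,
          s * g ((s : ℂ) * Complex.exp (θ * Complex.I)) := by
  set A : Set ℂ := {z : ℂ | a ≤ ‖z‖ ∧ ‖z‖ ≤ b} with hA
  have hAmeas : MeasurableSet A := by
    apply MeasurableSet.inter
    · exact measurableSet_le measurable_const continuous_norm.measurable
    · exact measurableSet_le continuous_norm.measurable measurable_const
  have h1 : (∫ w in A, g w) = ∫ w, A.indicator g w := (integral_indicator hAmeas).symm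
  rw [h1, ← Complex.integral_comp_polarCoord_symm (A.indicator g)]
  have h2 : ∀ p ∈ polarCoord.target,
      p.1 • A.indicator g (Complex.polarCoord.symm p)
        = (Icc a b ×ˢ (univ : Set ℝ)).indicator
            (fun p : ℝ × ℝ => p.1 • g ((p.1 : ℂ) * Complex.exp (p.2 * Complex.I))) p := by
    intro p hp
    rw [polarCoord_target] at hp
    have hp1 : 0 < p.1 := hp.1
    have habs : ‖Complex.polarCoord.symm p‖ = p.1 := by
      rw [Complex.norm_polarCoord_symm, abs_of_pos hp1]
    by_cases hmem : p.1 ∈ Icc a b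
    · have hin : Complex.polarCoord.symm p ∈ A := by
        rw [hA, mem_setOf_eq, habs]; exact ⟨hmem.1, hmem.2⟩
      rw [indicator_of_mem hin, indicator_of_mem (by simp [hmem])]
      rw [symm_eq]
    · have hout : Complex.polarCoord.symm p ∉ A := by
        intro hcon
        rw [hA, mem_setOf_eq, habs] at hcon
        exact hmem hcon
      rw [indicator_of_notMem hout, indicator_of_notMem (by simp [hmem]), smul_zero]
  rw [setIntegral_congr_fun (polarCoord.open_target.measurableSet) h2]
  rw [setIntegral_indicator ((measurableSet_Icc).prod MeasurableSet.univ)]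
  have h3 : polarCoord.target ∩ (Icc a b ×ˢ (univ : Set ℝ))
      = Icc a b ×ˢ Ioo (-Real.pi) Real.pi := by
    rw [polarCoord_target, Set.prod_inter_prod]
    congr 1
    · rw [Set.inter_eq_right]
      intro x hx
      exact lt_of_lt_of_le ha hx.1
    · exact Set.inter_univ _
  rw [h3]
  rw [show (volume : Measure (ℝ × ℝ)) = volume.prod volume from Measure.volume_eq_prod ℝ ℝ,
    ← Measure.prod_restrict, MeasureTheory.integral_prod _ hg]
  simp [smul_eq_mul]



-- convenient form over the set Ioo
lemma circle_avg_log' {s : ℝ} (hs : 0 < s) {z : ℂ} (hz : ‖z‖ ≠ s) :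
    (∫ θ in Ioo (-Real.pi) Real.pi,
        Real.log (‖(s:ℂ) * Complex.exp (θ * Complex.I) - z‖))
      = 2 * Real.pi * Real.log (max s (‖z‖)) := by
  rw [← MeasureTheory.integral_Ioc_eq_integral_Ioo,
    ← intervalIntegral.integral_of_le (by linarith [Real.pi_pos] : -Real.pi ≤ Real.pi)]
  exact circle_avg_log hs hz

lemma cont_L (z : ℂ) : Continuous fun p : ℝ × ℝ =>
    ‖(p.1 : ℂ) * Complex.exp (p.2 * Complex.I) - z‖ := by
  apply continuous_norm.comp
  fun_prop

/-- key integrability of the log integrand on the polar rectangle -/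
lemma log_integrable (a b : ℝ) (ha : 0 < a) (hab : a ≤ b) (z : ℂ) :
    Integrable (fun p : ℝ × ℝ =>
        Real.log (‖(p.1 : ℂ) * Complex.exp (p.2 * Complex.I) - z‖))
      ((volume.restrict (Icc a b)).prod (volume.restrict (Ioo (-Real.pi) Real.pi))) := by
  set μ := (volume.restrict (Icc a b)).prod (volume.restrict (Ioo (-Real.pi) Real.pi)) with hμ
  set M : ℝ := b + ‖z‖ + 1 with hM
  have hM1 : 1 ≤ M := by
    have := norm_nonneg z; nlinarith
  set L : ℝ × ℝ → ℝ := fun p =>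
    Real.log (‖(p.1 : ℂ) * Complex.exp (p.2 * Complex.I) - z‖) with hL
  have hLmeas : Measurable L := Real.measurable_log.comp (cont_L z).measurable
  -- bound: for p.1 ∈ Icc a b, |...| ≤ M and hence log ≤ log M
  have habs_le : ∀ p : ℝ × ℝ, p.1 ∈ Icc a b →
      ‖(p.1 : ℂ) * Complex.exp (p.2 * Complex.I) - z‖ ≤ M := by
    intro p hp
    calc ‖(p.1 : ℂ) * Complex.exp (p.2 * Complex.I) - z‖
        ≤ ‖(p.1 : ℂ) * Complex.exp (p.2 * Complex.I)‖ + ‖z‖ :=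
          (norm_sub_le _ _)
      _ ≤ b + ‖z‖ + 1 := by
          have he : ‖Complex.exp ((p.2:ℂ) * Complex.I)‖ = 1 := by
            simp [Complex.norm_exp]
          rw [norm_mul, he, mul_one, Complex.norm_real, Real.norm_eq_abs]
          have h1 : |p.1| ≤ b := by
            rw [_root_.abs_of_pos (lt_of_lt_of_le ha hp.1)]; exact hp.2
          linarith
  have hlog_le : ∀ p : ℝ × ℝ, p.1 ∈ Icc a b → L p ≤ Real.log M := by
    intro p hp
    rcases eq_or_lt_of_le (norm_nonneg ((p.1 : ℂ) * Complex.exp (p.2 * Complex.I) - z))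
      with h0 | h0
    · rw [hL]; simp only [← h0, Real.log_zero]
      exact Real.log_nonneg hM1
    · exact Real.log_le_log h0 (habs_le p hp)
  -- G = log M - L ≥ 0 on the rectangle
  set G : ℝ × ℝ → ℝ := fun p => Real.log M - L p with hG
  have hGmeas : Measurable G := measurable_const.sub hLmeas
  suffices hGint : Integrable G μ by
    have : L = fun p => Real.log M - G p := by
      funext p; simp [hG]
    rw [this]
    exact (integrable_const _).sub hGint
  constructor
  · exact hGmeas.aestronglyMeasurable
  · -- finite integral via Tonelli
    rw [hasFiniteIntegral_iff_norm]
    have hae : ∀ᵐ p ∂μ, p ∈ (Icc a b) ×ˢ (Ioo (-Real.pi) Real.pi) := by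
      rw [hμ, Measure.prod_restrict]
      exact ae_restrict_mem ((measurableSet_Icc).prod measurableSet_Ioo)
    have step1 : ∫⁻ p, ENNReal.ofReal ‖G p‖ ∂μ = ∫⁻ p, ENNReal.ofReal (G p) ∂μ := by
      apply lintegral_congr_ae
      filter_upwards [hae] with p hp
      have hnn : 0 ≤ G p := by
        have := hlog_le p hp.1
        simp only [hG]; linarith
      rw [Real.norm_eq_abs, _root_.abs_of_nonneg hnn]
    rw [step1]
    rw [hμ, MeasureTheory.lintegral_prod (fun p => ENNReal.ofReal (G p)) (((ENNReal.measurable_ofReal.comp hGmeas) : Measurable fun p => ENNReal.ofReal (G p)).aemeasurable)]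
    -- bound the inner integral for a.e. s
    have hbound : ∀ᵐ s ∂(volume.restrict (Icc a b)),
        (∫⁻ θ, ENNReal.ofReal (G (s, θ)) ∂(volume.restrict (Ioo (-Real.pi) Real.pi)))
          ≤ ENNReal.ofReal (2 * Real.pi * (Real.log M - Real.log a)) := by
      have hnull : (volume.restrict (Icc a b)) {‖z‖} = 0 := by
        rw [Measure.restrict_apply (MeasurableSet.singleton _)]
        exact measure_mono_null (inter_subset_left) (Real.volume_singleton)
      filter_upwards [ae_restrict_mem measurableSet_Icc,
        (ae_iff.2 (by simpa using hnull) : ∀ᵐ s ∂(volume.restrict (Icc a b)), s ≠ ‖z‖)]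
        with s hs hsz
      have hs0 : 0 < s := lt_of_lt_of_le ha hs.1
      -- the θ-slice is continuous hence integrable on Ioo
      have hcont : Continuous fun θ : ℝ => G (s, θ) := by
        apply continuous_const.sub
        apply Continuous.log
        · exact (cont_L z).comp (continuous_const.prodMk continuous_id)
        · intro θ
          intro hzero
          rw [norm_eq_zero, sub_eq_zero] at hzero
          apply hsz
          rw [← hzero, norm_mul, Complex.norm_exp]
          simp [abs_of_pos hs0]
      have hLc : Continuous fun θ : ℝ => L (s, θ) := by
        have : (fun θ : ℝ => G (s, θ)) = fun θ => Real.log M - L (s, θ) := rfl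
        have h2 := (continuous_const.sub hcont : Continuous fun θ : ℝ => Real.log M - G (s, θ))
        exact h2.congr (fun θ => by simp [hG])
      have hint : IntegrableOn (fun θ : ℝ => G (s, θ)) (Ioo (-Real.pi) Real.pi) :=
        (hcont.integrableOn_Icc (a := -Real.pi) (b := Real.pi)).mono_set Ioo_subset_Icc_self
      have hintL : IntegrableOn (fun θ : ℝ => L (s, θ)) (Ioo (-Real.pi) Real.pi) :=
        (hLc.integrableOn_Icc (a := -Real.pi) (b := Real.pi)).mono_set Ioo_subset_Icc_self
      have hnn : 0 ≤ᵐ[volume.restrict (Ioo (-Real.pi) Real.pi)] fun θ => G (s, θ) :=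
        Filter.Eventually.of_forall fun θ => by
          have := hlog_le (s, θ) hs
          simp only [hG, Pi.zero_apply]; linarith
      rw [← ofReal_integral_eq_lintegral_ofReal hint hnn]
      apply ENNReal.ofReal_le_ofReal
      have hvol : (volume (Ioo (-Real.pi) Real.pi)).toReal = 2 * Real.pi := by
        rw [Real.volume_Ioo, ENNReal.toReal_ofReal (by linarith [Real.pi_pos])]
        ring
      have hsplit : (∫ θ in Ioo (-Real.pi) Real.pi, G (s, θ))
          = 2 * Real.pi * Real.log M - ∫ θ in Ioo (-Real.pi) Real.pi, L (s, θ) := by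
        have : (fun θ : ℝ => G (s, θ)) = fun θ => Real.log M - L (s, θ) := rfl
        have hconst : Integrable (fun _ : ℝ => Real.log M) (volume.restrict (Ioo (-Real.pi) Real.pi)) :=
          integrableOn_const (by rw [Real.volume_Ioo]; exact ENNReal.ofReal_ne_top)
        rw [this, integral_sub hconst hintL]
        rw [setIntegral_const, measureReal_def, hvol, smul_eq_mul]
      rw [hsplit, circle_avg_log' hs0 (Ne.symm hsz)]
      have hloga : Real.log a ≤ Real.log (max s (‖z‖)) :=
        Real.log_le_log ha (le_trans hs.1 (le_max_left _ _))
      nlinarith [mul_le_mul_of_nonneg_left hloga (by positivity : (0:ℝ) ≤ 2 * Real.pi)]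
    calc ∫⁻ s, (∫⁻ θ, ENNReal.ofReal (G (s, θ)) ∂(volume.restrict (Ioo (-Real.pi) Real.pi)))
          ∂(volume.restrict (Icc a b))
        ≤ ∫⁻ _, ENNReal.ofReal (2 * Real.pi * (Real.log M - Real.log a))
            ∂(volume.restrict (Icc a b)) := lintegral_mono_ae hbound
      _ < ⊤ := by
          rw [lintegral_const, Measure.restrict_apply_univ]
          exact ENNReal.mul_lt_top ENNReal.ofReal_lt_top measure_Icc_lt_top





lemma abs_polar (s θ : ℝ) :
    ‖(s:ℂ) * Complex.exp (θ * Complex.I)‖ = |s| := by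
  rw [norm_mul, Complex.norm_real, Real.norm_eq_abs]
  simp [Complex.norm_exp]

lemma vol_Ioo_pi : (volume (Ioo (-Real.pi) Real.pi)).toReal = 2 * Real.pi := by
  rw [Real.volume_Ioo, ENNReal.toReal_ofReal (by linarith [Real.pi_pos])]
  ring

lemma rect_ae (a b : ℝ) : ∀ᵐ p : ℝ × ℝ ∂((volume.restrict (Icc a b)).prod
    (volume.restrict (Ioo (-Real.pi) Real.pi))),
    p ∈ (Icc a b) ×ˢ (Ioo (-Real.pi) Real.pi) := by
  rw [Measure.prod_restrict]
  exact ae_restrict_mem ((measurableSet_Icc).prod measurableSet_Ioo)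

lemma logpot_radial (a b : ℝ) (ha : 0 < a) (hab : a ≤ b) (z : ℂ) (c0 : ℝ) (hc0 : 0 ≤ c0)
    (n : ℕ) :
    (∫ w in {z' : ℂ | a ≤ ‖z'‖ ∧ ‖z'‖ ≤ b},
        c0 * ‖w‖ ^ n * Real.log (1 / ‖w - z‖))
      = -(2 * Real.pi) * c0 * ∫ s in a..b, s ^ (n+1) * Real.log (max s (‖z‖)) := by
  set g : ℂ → ℝ := fun w => c0 * ‖w‖ ^ n * Real.log (1 / ‖w - z‖) with hgdef
  set μ := (volume.restrict (Icc a b)).prod (volume.restrict (Ioo (-Real.pi) Real.pi)) with hμ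
  set L : ℝ × ℝ → ℝ := fun p =>
    Real.log (‖(p.1 : ℂ) * Complex.exp (p.2 * Complex.I) - z‖) with hLdef
  have hFeq : (fun p : ℝ × ℝ => p.1 • g ((p.1 : ℂ) * Complex.exp (p.2 * Complex.I)))
      = fun p => (p.1 * c0 * |p.1| ^ n) * (-L p) := by
    funext p
    simp only [hgdef, smul_eq_mul, abs_polar, one_div, Real.log_inv, hLdef]
    ring
  have hψmeas : Measurable fun p : ℝ × ℝ => p.1 * c0 * |p.1| ^ n := by fun_prop
  have hψbdd : ∀ᵐ p ∂μ, ‖p.1 * c0 * |p.1| ^ n‖ ≤ b * c0 * b ^ n := by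
    filter_upwards [rect_ae a b] with p hp
    have h1 : 0 < p.1 := lt_of_lt_of_le ha hp.1.1
    have h2 : p.1 ≤ b := hp.1.2
    rw [Real.norm_eq_abs, _root_.abs_of_nonneg (by positivity), _root_.abs_of_pos h1]
    have h3 : p.1 ^ n ≤ b ^ n := pow_le_pow_left₀ h1.le h2 n
    have hb : 0 < b := lt_of_lt_of_le ha hab
    have key : p.1 * p.1 ^ n ≤ b * b ^ n :=
      mul_le_mul h2 h3 (pow_nonneg h1.le n) hb.le
    nlinarith [mul_le_mul_of_nonneg_left key hc0]
  have hF : Integrable (fun p : ℝ × ℝ => p.1 • g ((p.1 : ℂ) * Complex.exp (p.2 * Complex.I))) μ := by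
    rw [hFeq]
    exact ((log_integrable a b ha hab z).neg).bdd_mul hψmeas.aestronglyMeasurable hψbdd
  rw [annulus_polar a b ha g hF]
  -- a.e. evaluation of inner integral
  have hNull : (volume.restrict (Icc a b)) {‖z‖} = 0 := by
    rw [Measure.restrict_apply (MeasurableSet.singleton _)]
    exact measure_mono_null (inter_subset_left) (Real.volume_singleton)
  have hinner : ∀ᵐ (s : ℝ) ∂(volume.restrict (Icc a b)),
      (∫ θ in Ioo (-Real.pi) Real.pi, s * g ((s : ℂ) * Complex.exp (θ * Complex.I)))
        = -(2 * Real.pi) * c0 * (s ^ (n+1) * Real.log (max s (‖z‖))) := by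
    filter_upwards [ae_restrict_mem measurableSet_Icc,
      (ae_iff.2 (by simpa using hNull) :
        ∀ᵐ s ∂(volume.restrict (Icc a b)), s ≠ ‖z‖)] with s hs hsz
    have hs0 : 0 < s := lt_of_lt_of_le ha hs.1
    have : (fun θ : ℝ => s * g ((s : ℂ) * Complex.exp (θ * Complex.I)))
        = fun θ : ℝ => (-(s * c0 * s ^ n)) *
            Real.log (‖(s : ℂ) * Complex.exp (θ * Complex.I) - z‖) := by
      funext θ
      simp only [hgdef, abs_polar, one_div, Real.log_inv, _root_.abs_of_pos hs0]
      ring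
    rw [this, integral_const_mul, circle_avg_log' hs0 (Ne.symm hsz)]
    ring
  have h9 := MeasureTheory.integral_congr_ae (μ := volume.restrict (Icc a b)) hinner
  rw [h9, integral_const_mul (μ := volume.restrict (Icc a b))]
  congr 1
  rw [MeasureTheory.integral_Icc_eq_integral_Ioc,
    ← intervalIntegral.integral_of_le hab]

lemma mass_radial (a b : ℝ) (ha : 0 < a) (hab : a ≤ b) (c0 : ℝ) (hc0 : 0 ≤ c0) (n : ℕ) :
    (∫ w in {z' : ℂ | a ≤ ‖z'‖ ∧ ‖z'‖ ≤ b}, c0 * ‖w‖ ^ n)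
      = (2 * Real.pi) * c0 * ∫ s in a..b, s ^ (n+1) := by
  set g : ℂ → ℝ := fun w => c0 * ‖w‖ ^ n with hgdef
  set μ := (volume.restrict (Icc a b)).prod (volume.restrict (Ioo (-Real.pi) Real.pi)) with hμ
  haveI h1 : IsFiniteMeasure (volume.restrict (Icc a b)) :=
    ⟨by rw [Measure.restrict_apply_univ]; exact measure_Icc_lt_top⟩
  haveI h2 : IsFiniteMeasure (volume.restrict (Ioo (-Real.pi) Real.pi)) :=
    ⟨by rw [Measure.restrict_apply_univ]; exact measure_Ioo_lt_top⟩
  have hFeq : (fun p : ℝ × ℝ => p.1 • g ((p.1 : ℂ) * Complex.exp (p.2 * Complex.I)))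
      = fun p => p.1 * c0 * |p.1| ^ n := by
    funext p
    simp only [hgdef, smul_eq_mul, abs_polar]
    ring
  have hψmeas : Measurable fun p : ℝ × ℝ => p.1 * c0 * |p.1| ^ n := by fun_prop
  have hψbdd : ∀ᵐ p ∂μ, ‖p.1 * c0 * |p.1| ^ n‖ ≤ b * c0 * b ^ n := by
    filter_upwards [rect_ae a b] with p hp
    have h1 : 0 < p.1 := lt_of_lt_of_le ha hp.1.1
    have h2 : p.1 ≤ b := hp.1.2
    rw [Real.norm_eq_abs, _root_.abs_of_nonneg (by positivity), _root_.abs_of_pos h1]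
    have h3 : p.1 ^ n ≤ b ^ n := pow_le_pow_left₀ h1.le h2 n
    have hb : 0 < b := lt_of_lt_of_le ha hab
    have key : p.1 * p.1 ^ n ≤ b * b ^ n :=
      mul_le_mul h2 h3 (pow_nonneg h1.le n) hb.le
    nlinarith [mul_le_mul_of_nonneg_left key hc0]
  have hF : Integrable (fun p : ℝ × ℝ =>
      p.1 • g ((p.1 : ℂ) * Complex.exp (p.2 * Complex.I))) μ := by
    rw [hFeq]
    exact Integrable.mono' (integrable_const _) hψmeas.aestronglyMeasurable hψbdd
  rw [annulus_polar a b ha g hF]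
  have hinner : ∀ (s : ℝ), s ∈ Icc a b →
      (∫ θ in Ioo (-Real.pi) Real.pi, s * g ((s : ℂ) * Complex.exp (θ * Complex.I)))
        = (2 * Real.pi) * c0 * s ^ (n+1) := by
    intro s hs
    have hs0 : 0 < s := lt_of_lt_of_le ha hs.1
    have heq : (fun θ : ℝ => s * g ((s : ℂ) * Complex.exp (θ * Complex.I)))
        = fun _ : ℝ => s * c0 * s ^ n := by
      funext θ
      simp only [hgdef, abs_polar, _root_.abs_of_pos hs0]
      ring
    rw [heq, setIntegral_const, smul_eq_mul, measureReal_def, vol_Ioo_pi]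
    ring
  rw [setIntegral_congr_fun measurableSet_Icc hinner]
  rw [MeasureTheory.integral_Icc_eq_integral_Ioc, ← intervalIntegral.integral_of_le hab,
    ← intervalIntegral.integral_const_mul]


/-- antiderivative of s^m log s -/
def pl (m : ℕ) (s : ℝ) : ℝ := s^(m+1) * Real.log s / (m+1) - s^(m+1) / ((m+1)*(m+1))

lemma pl_deriv (m : ℕ) {s : ℝ} (hs : 0 < s) :
    HasDerivAt (pl m) (s ^ m * Real.log s) s := by
  have h1 : HasDerivAt (fun t : ℝ => t ^ (m+1)) ((m+1 : ℕ) * s ^ m) s := by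
    simpa using hasDerivAt_pow (m+1) s
  have h2 : HasDerivAt Real.log s⁻¹ s := Real.hasDerivAt_log hs.ne'
  have h3 : HasDerivAt (fun t : ℝ => t ^ (m+1) * Real.log t)
      ((m+1 : ℕ) * s ^ m * Real.log s + s ^ (m+1) * s⁻¹) s := h1.mul h2
  have h4 := (h3.div_const ((m:ℝ)+1)).sub ((h1.div_const (((m:ℝ)+1)*((m:ℝ)+1))))
  refine h4.congr_deriv ?_
  have hm : ((m:ℝ)+1) ≠ 0 := by positivity
  have hs' : s ^ (m+1) * s⁻¹ = s ^ m := by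
    rw [pow_succ, mul_assoc, mul_inv_cancel₀ hs.ne', mul_one]
  push_cast
  rw [hs']
  field_simp
  ring

lemma cont_pow_log (m : ℕ) {a b : ℝ} (ha : 0 < a) :
    ∀ s ∈ Set.uIcc a b, ContinuousAt (fun t : ℝ => t ^ m * Real.log t) s → True := fun _ _ _ => trivial

lemma intervalIntegrable_pow_log (m : ℕ) {a b : ℝ} (ha : 0 < a) (hb : 0 < b) :
    IntervalIntegrable (fun s : ℝ => s ^ m * Real.log s) volume a b := by
  apply ContinuousOn.intervalIntegrable
  intro s hs
  have hs0 : 0 < s := lt_of_lt_of_le (lt_min ha hb) (by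
    rcases Set.mem_uIcc.1 hs with h | h
    · exact le_trans (min_le_left _ _) h.1
    · exact le_trans (min_le_right _ _) h.1)
  exact (((continuous_pow m).continuousAt).mul (Real.continuousAt_log hs0.ne')).continuousWithinAt

lemma int_pow_log (m : ℕ) {a b : ℝ} (ha : 0 < a) (hb : 0 < b) :
    ∫ s in a..b, s ^ m * Real.log s = pl m b - pl m a := by
  apply intervalIntegral.integral_eq_sub_of_hasDerivAt
  · intro s hs
    have hs0 : 0 < s := lt_of_lt_of_le (lt_min ha hb) (by
      rcases Set.mem_uIcc.1 hs with h | h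
      · exact le_trans (min_le_left _ _) h.1
      · exact le_trans (min_le_right _ _) h.1)
    exact pl_deriv m hs0
  · exact intervalIntegrable_pow_log m ha hb

lemma intervalIntegrable_pow_logmax (m : ℕ) {r : ℝ} (hr : 0 < r) (a b : ℝ) :
    IntervalIntegrable (fun s : ℝ => s ^ m * Real.log (max s r)) volume a b := by
  apply Continuous.intervalIntegrable
  apply (continuous_pow m).mul
  apply Continuous.log (continuous_id.max continuous_const)
  intro s
  have : r ≤ max s r := le_max_right _ _
  positivity

lemma int_max_high (m : ℕ) {a b r : ℝ} (hab : a ≤ b) (hrb : b ≤ r) :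
    ∫ s in a..b, s ^ m * Real.log (max s r)
      = Real.log r * ((b^(m+1) - a^(m+1)) / ((m:ℝ)+1)) := by
  have h : ∀ s ∈ Set.uIcc a b, s ^ m * Real.log (max s r) = s ^ m * Real.log r := by
    intro s hs
    rw [Set.uIcc_of_le hab] at hs
    rw [max_eq_right (le_trans hs.2 hrb)]
  rw [intervalIntegral.integral_congr h]
  have h2 := intervalIntegral.integral_mul_const (μ := volume) (a := a) (b := b)
    (r := Real.log r) (f := fun s : ℝ => s ^ m)
  rw [h2, integral_pow]
  push_cast
  ring

lemma int_max_low (m : ℕ) {a b r : ℝ} (hra : r ≤ a) (hab : a ≤ b) :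
    ∫ s in a..b, s ^ m * Real.log (max s r) = ∫ s in a..b, s ^ m * Real.log s := by
  apply intervalIntegral.integral_congr
  intro s hs
  rw [Set.uIcc_of_le hab] at hs
  show s ^ m * Real.log (max s r) = s ^ m * Real.log s
  rw [max_eq_left (le_trans hra hs.1)]

lemma int_max_mid (m : ℕ) {a b r : ℝ} (ha : 0 < a) (har : a ≤ r) (hrb : r ≤ b) :
    ∫ s in a..b, s ^ m * Real.log (max s r)
      = Real.log r * ((r^(m+1) - a^(m+1)) / ((m:ℝ)+1)) + (pl m b - pl m r) := by
  have hr : 0 < r := lt_of_lt_of_le ha har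
  have hb : 0 < b := lt_of_lt_of_le hr hrb
  rw [← intervalIntegral.integral_add_adjacent_intervals
    (intervalIntegrable_pow_logmax m hr a r) (intervalIntegrable_pow_logmax m hr r b)]
  congr 1
  · exact int_max_high m har (le_refl r)
  · rw [show (∫ s in r..b, s ^ m * Real.log (max s r))
        = ∫ s in r..b, s ^ m * Real.log s from intervalIntegral.integral_congr (by
      intro s hs
      rw [Set.uIcc_of_le hrb] at hs
      show s ^ m * Real.log (max s r) = s ^ m * Real.log s
      rw [max_eq_left hs.1])]
    exact int_pow_log m hr hb


lemma mono_out (k : ℕ) (hk : 1 ≤ k) (c : ℝ) (hc : 0 < c) {R : ℝ} (hR : 0 < R)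
    (hRk : (k:ℝ) * c * R ^ k = 1) :
    MonotoneOn (fun t : ℝ => c * t ^ k - Real.log t) (Ici R) := by
  apply monotoneOn_of_deriv_nonneg (convex_Ici R)
  · apply ContinuousOn.sub (by fun_prop)
    intro t ht
    exact (Real.continuousAt_log (lt_of_lt_of_le hR ht).ne').continuousWithinAt
  · intro t ht
    rw [interior_Ici] at ht
    have ht0 : 0 < t := lt_trans hR ht
    exact (((hasDerivAt_pow k t).const_mul c).sub (Real.hasDerivAt_log ht0.ne')).differentiableAt.differentiableWithinAt
  · intro t ht
    rw [interior_Ici] at ht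
    have ht0 : 0 < t := lt_trans hR ht
    have hd : deriv (fun t : ℝ => c * t ^ k - Real.log t) t
        = c * ((k:ℝ) * t ^ (k-1)) - t⁻¹ :=
      (((hasDerivAt_pow k t).const_mul c).sub (Real.hasDerivAt_log ht0.ne')).deriv
    rw [hd, sub_nonneg]
    have hpow : t * t ^ (k-1) = t ^ k := by
      rw [← pow_succ']
      congr 1
      omega
    have hmono : R ^ k ≤ t ^ k := pow_le_pow_left₀ hR.le ht.le k
    have key : 1 ≤ (k:ℝ) * c * t ^ k := by
      rw [← hRk]
      have : 0 ≤ (k:ℝ) * c := by positivity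
      nlinarith
    rw [inv_eq_one_div, div_le_iff₀ ht0]
    have heq : c * ((k:ℝ) * t ^ (k-1)) * t = (k:ℝ) * c * t ^ k := by rw [← hpow]; ring
    rw [heq]
    exact key
lemma mono_in (k : ℕ) (hk : 1 ≤ k) (c q : ℝ) (hc : 0 < c) (hq : 0 < q) {ρ : ℝ} (hρ : 0 < ρ)
    (hρk : (k:ℝ) * c * ρ ^ k = q) :
    AntitoneOn (fun t : ℝ => c * t ^ k - q * Real.log t) (Ioc 0 ρ) := by
  apply antitoneOn_of_deriv_nonpos (convex_Ioc 0 ρ)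
  · apply ContinuousOn.sub (by fun_prop)
    apply ContinuousOn.mul continuousOn_const
    intro t ht
    exact (Real.continuousAt_log ht.1.ne').continuousWithinAt
  · intro t ht
    rw [interior_Ioc] at ht
    exact (((hasDerivAt_pow k t).const_mul c).sub
      ((Real.hasDerivAt_log ht.1.ne').const_mul q)).differentiableAt.differentiableWithinAt
  · intro t ht
    rw [interior_Ioc] at ht
    have ht0 : 0 < t := ht.1
    have hd : deriv (fun t : ℝ => c * t ^ k - q * Real.log t) t
        = c * ((k:ℝ) * t ^ (k-1)) - q * t⁻¹ := by
      have h1 := ((hasDerivAt_pow k t).const_mul c).sub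
        ((Real.hasDerivAt_log ht0.ne').const_mul q)
      exact h1.deriv
    rw [hd, sub_nonpos]
    have hpow : t * t ^ (k-1) = t ^ k := by
      rw [← pow_succ']; congr 1; omega
    have hmono : t ^ k ≤ ρ ^ k := pow_le_pow_left₀ ht0.le ht.2.le k
    have key : (k:ℝ) * c * t ^ k ≤ q := by
      rw [← hρk]
      have : 0 ≤ (k:ℝ) * c := by positivity
      nlinarith
    rw [show q * t⁻¹ = q / t by ring, le_div_iff₀ ht0]
    have heq : c * ((k:ℝ) * t ^ (k-1)) * t = (k:ℝ) * c * t ^ k := by rw [← hpow]; ring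
    rw [heq]
    exact key

lemma withDensity_integral {A : Set ℂ} (d : ℂ → ℝ) (hd : Measurable d)
    (hd0 : ∀ z, 0 ≤ d z) (f : ℂ → ℝ) :
    (∫ w, f w ∂((volume.restrict A).withDensity fun z => ENNReal.ofReal (d z)))
      = ∫ w in A, d w * f w := by
  have h1 : (fun z => ENNReal.ofReal (d z)) = fun z => ((d z).toNNReal : ENNReal) := rfl
  rw [h1, integral_withDensity_eq_integral_smul hd.real_toNNReal f]
  congr 1 with w
  rw [NNReal.smul_def, Real.coe_toNNReal _ (hd0 w), smul_eq_mul]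

set_option maxHeartbeats 1000000 in
/-- for a point source at the origin added to `Q(z) = C|z|^{2p}`, the equilibrium
support is the annulus `ρ ≤ |z| ≤ R`, verified through the Frostman conditions. -/
theorem annulus_equilibrium
    (p : ℕ) (hp : 1 ≤ p) (C q : ℝ) (hC : 0 < C) (hq : 0 < q)
    (μ : Measure ℂ)
    (hμ : μ = (volume.restrict
        {z : ℂ | (q / (2 * (p : ℝ) * C * (1 + q))) ^ ((1 : ℝ) / (2 * (p : ℝ))) ≤ ‖z‖ ∧
          ‖z‖ ≤ Rrad p C}).withDensity
        (fun z => ENNReal.ofReal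
          ((1 + q) * 2 * (p : ℝ) ^ 2 * C / Real.pi * ‖z‖ ^ (2 * p - 2)))) :
    IsProbabilityMeasure μ ∧
    ∃ F₀ : ℝ,
      (∀ z : ℂ,
        (q / (2 * (p : ℝ) * C * (1 + q))) ^ ((1 : ℝ) / (2 * (p : ℝ))) ≤ ‖z‖ →
        ‖z‖ ≤ Rrad p C →
        logPot μ z + ((1 + q) * C * ‖z‖ ^ (2 * p) +
          q * Real.log (1 / ‖z‖)) = F₀) ∧
      (∀ z : ℂ, z ≠ 0 →
        logPot μ z + ((1 + q) * C * ‖z‖ ^ (2 * p) +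
          q * Real.log (1 / ‖z‖)) ≥ F₀) := by
  -- basic abbreviations and facts
  set P : ℝ := (p : ℝ) with hPdef
  have hP0 : (0:ℝ) < P := by
    rw [hPdef]
    exact_mod_cast Nat.lt_of_lt_of_le Nat.zero_lt_one hp
  have hq1 : (0:ℝ) < 1 + q := by linarith
  have hπ := Real.pi_pos
  set c0 : ℝ := (1 + q) * 2 * P ^ 2 * C / Real.pi with hc0def
  have hc0 : 0 < c0 := by rw [hc0def]; positivity
  set ρ : ℝ := (q / (2 * P * C * (1 + q))) ^ ((1 : ℝ) / (2 * P)) with hρdef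
  set R : ℝ := Rrad p C with hRdef
  have hbase : (0:ℝ) < 2 * P * C := by positivity
  have hbaseρ : (0:ℝ) < q / (2 * P * C * (1 + q)) := by positivity
  have hρ0 : 0 < ρ := Real.rpow_pos_of_pos hbaseρ _
  have hR0 : 0 < R := by
    rw [hRdef, Rrad]
    exact Real.rpow_pos_of_pos hbase _
  have h2p0 : ((2 * p : ℕ) : ℝ) = 2 * P := by push_cast [hPdef]; ring
  have hρ2p : ρ ^ (2 * p) = q / (2 * P * C * (1 + q)) := by
    rw [hρdef, ← Real.rpow_natCast (_ ^ _) (2*p), ← Real.rpow_mul hbaseρ.le, h2p0]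
    rw [show (1:ℝ) / (2*P) * (2*P) = 1 by field_simp]
    exact Real.rpow_one _
  have hR2p : R ^ (2 * p) = 1 / (2 * P * C) := by
    rw [hRdef, Rrad, ← Real.rpow_natCast (_ ^ _) (2*p), ← Real.rpow_mul hbase.le, h2p0]
    rw [show -(1:ℝ) / (2*P) * (2*P) = -1 by field_simp]
    rw [Real.rpow_neg_one, inv_eq_one_div]
  have hρR : ρ ≤ R := by
    have h1 : ρ ^ (2*p) ≤ R ^ (2*p) := by
      rw [hρ2p, hR2p, div_le_div_iff₀ (by positivity) (by positivity)]
      nlinarith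
    exact le_of_pow_le_pow_left₀ (by omega) hR0.le h1
  set A : Set ℂ := {z : ℂ | ρ ≤ ‖z‖ ∧ ‖z‖ ≤ R} with hAdef
  set d : ℂ → ℝ := fun z => c0 * ‖z‖ ^ (2 * p - 2) with hddef
  have hdmeas : Measurable d := by
    apply Measurable.mul measurable_const
    exact (continuous_norm.measurable).pow_const _
  have hd0 : ∀ z, 0 ≤ d z := fun z => by rw [hddef]; positivity
  have hμ' : μ = (volume.restrict A).withDensity fun z => ENNReal.ofReal (d z) := hμ
  -- cast bookkeeping
  have hm1 : 2 * p - 2 + 1 = 2 * p - 1 := by omega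
  have hm2 : 2 * p - 1 + 1 = 2 * p := by omega
  have hcast : ((2 * p - 1 : ℕ) : ℝ) + 1 = 2 * P := by
    rw [Nat.cast_sub (by omega)]
    push_cast [hPdef]
    ring
  -- logPot evaluation
  have hlogPot : ∀ z : ℂ, logPot μ z
      = -(2 * Real.pi) * c0 * ∫ s in ρ..R, s ^ (2*p-1) * Real.log (max s (‖z‖)) := by
    intro z
    rw [logPot, hμ', withDensity_integral d hdmeas hd0, hAdef, hddef]
    have := logpot_radial ρ R hρ0 hρR z c0 hc0.le (2*p-2)
    rw [hm1] at this
    exact this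
  -- total mass
  have hmass : ∫ w in A, d w = 1 := by
    rw [hAdef, hddef]
    have := mass_radial ρ R hρ0 hρR c0 hc0.le (2*p-2)
    rw [hm1] at this
    rw [this, integral_pow, hm2, hcast, hρ2p, hR2p, hc0def]
    field_simp [hπ.ne', hP0.ne', hC.ne', hq1.ne']
    ring
  have hAmeas : MeasurableSet A := by
    apply MeasurableSet.inter
    · exact measurableSet_le measurable_const continuous_norm.measurable
    · exact measurableSet_le continuous_norm.measurable measurable_const
  have hAfin : volume A < ⊤ := by
    apply lt_of_le_of_lt (measure_mono (fun z hz => ?_)) (measure_closedBall_lt_top (x := (0:ℂ)) (r := R))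
    rw [mem_closedBall_zero_iff]
    exact hz.2
  have hIntOn : IntegrableOn d A := by
    apply Integrable.mono' (g := fun _ => c0 * R ^ (2*p-2))
      (integrableOn_const hAfin.ne)
      (hdmeas.aestronglyMeasurable.restrict)
    filter_upwards [ae_restrict_mem hAmeas] with w hw
    rw [hddef, Real.norm_eq_abs, _root_.abs_of_nonneg (hd0 w)]
    have : ‖w‖ ^ (2*p-2) ≤ R ^ (2*p-2) :=
      pow_le_pow_left₀ (norm_nonneg w) hw.2 _
    exact mul_le_mul_of_nonneg_left this hc0.le
  have hprob : IsProbabilityMeasure μ := by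
    constructor
    rw [hμ', withDensity_apply _ MeasurableSet.univ, Measure.restrict_univ,
      ← ofReal_integral_eq_lintegral_ofReal hIntOn
        (Filter.Eventually.of_forall fun w => hd0 w),
      hmass, ENNReal.ofReal_one]
  refine ⟨hprob, (1 + q) * (C * R ^ (2*p) - Real.log R), ?_, ?_⟩
  · -- equality on the annulus
    intro z hz1 hz2
    have hr0 : 0 < ‖z‖ := lt_of_lt_of_le hρ0 hz1
    rw [hlogPot z, int_max_mid (2*p-1) hρ0 hz1 hz2, pl, pl, hm2, hcast,
      one_div (‖z‖), Real.log_inv, hρ2p, hR2p, hc0def]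
    field_simp [hπ.ne', hP0.ne', hC.ne', hq1.ne']
    ring
  · -- lower bound everywhere
    intro z hz
    have hr0 : 0 < ‖z‖ := norm_pos_iff.2 hz
    rcases le_or_gt (‖z‖) R with hzR | hzR
    · rcases le_or_gt ρ (‖z‖) with hz1 | hz1
      · -- on annulus: equality
        apply ge_of_eq
        rw [hlogPot z, int_max_mid (2*p-1) hρ0 hz1 hzR, pl, pl, hm2, hcast,
          one_div (‖z‖), Real.log_inv, hρ2p, hR2p, hc0def]
        field_simp [hπ.ne', hP0.ne', hC.ne', hq1.ne']
        ring
      · -- inner region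
        have hρk : ((2*p : ℕ):ℝ) * ((1+q)*C) * ρ ^ (2*p) = q := by
          rw [h2p0, hρ2p]
          field_simp
          try ring
        have hant := mono_in (2*p) (by omega) ((1+q)*C) q (by positivity) hq hρ0 hρk
        have hmono := hant (mem_Ioc.2 ⟨hr0, hz1.le⟩) (mem_Ioc.2 ⟨hρ0, le_refl ρ⟩) hz1.le
        simp only at hmono
        -- E(r) = F₀ + (h r - h ρ)
        have hE : logPot μ z + ((1 + q) * C * ‖z‖ ^ (2 * p) +
            q * Real.log (1 / ‖z‖))
            = (1 + q) * (C * R ^ (2*p) - Real.log R)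
              + (((1+q)*C * ‖z‖ ^ (2*p) - q * Real.log (‖z‖))
                - ((1+q)*C * ρ ^ (2*p) - q * Real.log ρ)) := by
          rw [hlogPot z, int_max_low (2*p-1) hz1.le hρR, int_pow_log (2*p-1) hρ0 hR0,
            pl, pl, hm2, hcast, one_div (‖z‖), Real.log_inv, hc0def]
          rw [hρ2p, hR2p]
          field_simp [hπ.ne', hP0.ne', hC.ne', hq1.ne']
          ring
        rw [hE]
        have : (1+q)*C * ρ ^ (2*p) - q * Real.log ρ
            ≤ (1+q)*C * ‖z‖ ^ (2*p) - q * Real.log (‖z‖) := hmono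
        linarith
    · -- outer region
      have hRk : ((2*p : ℕ):ℝ) * C * R ^ (2*p) = 1 := by
        rw [h2p0, hR2p]
        field_simp [hπ.ne', hP0.ne', hC.ne', hq1.ne']
        try ring
      have hmon := mono_out (2*p) (by omega) C hC hR0 hRk
      have hmono := hmon (mem_Ici.2 (le_refl R)) (mem_Ici.2 hzR.le) hzR.le
      simp only at hmono
      have hE : logPot μ z + ((1 + q) * C * ‖z‖ ^ (2 * p) +
          q * Real.log (1 / ‖z‖))
          = (1+q) * (C * ‖z‖ ^ (2*p) - Real.log (‖z‖)) := by
        rw [hlogPot z, int_max_high (2*p-1) hρR hzR.le, hm2, hcast,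
          one_div (‖z‖), Real.log_inv, hρ2p, hR2p, hc0def]
        field_simp [hπ.ne', hP0.ne', hC.ne', hq1.ne']
        ring
      rw [hE]
      have : C * R ^ (2*p) - Real.log R
          ≤ C * ‖z‖ ^ (2*p) - Real.log (‖z‖) := hmono
      nlinarith
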